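/- A pair of probability vectors (α, β) ∈ Δ_d² satisfies the generalized bracelet condition of order 1 if and only if it satisfies the classical bracelet condition: there exist complex numbers a₁,...,a_d, b₁,...,b_d with ∑|a_i|² = ∑|b_i|² = 1, ∑ a_i·conj(b_i) = 0, |a_i|² = α_i and |b_i|² = β_i, if and only if for every i, √(α_i β_i) ≤ ∑_{j≠i} √(α_j β_j). -/

import Mathlib

open Finset Complex

lemma exists_triangle (p q r : ℝ) (hp : 0 ≤ p) (hq : 0 ≤ q) (hr : 0 ≤ r)
    (h1 : p ≤ q + r) (h2 : q ≤ p + r) (h3 : r ≤ p + q) :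
    ∃ u v w : ℂ, ‖u‖ = 1 ∧ ‖v‖ = 1 ∧ ‖w‖ = 1 ∧
      (p : ℂ) * u + (q : ℂ) * v + (r : ℂ) * w = 0 := by
  have hIVT : ∃ θ ∈ Set.Icc (0:ℝ) Real.pi, p^2 + q^2 + 2*p*q*Real.cos θ = r^2 := by
    have hc : ContinuousOn (fun θ => p^2 + q^2 + 2*p*q*Real.cos θ) (Set.Icc 0 Real.pi) := by
      fun_prop
    have hmem : r^2 ∈ Set.Icc (p^2 + q^2 + 2*p*q*Real.cos Real.pi)
        (p^2 + q^2 + 2*p*q*Real.cos 0) := by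
      rw [Real.cos_pi, Real.cos_zero]
      constructor <;> nlinarith
    obtain ⟨θ, hθ, hθ2⟩ := intermediate_value_Icc' (le_of_lt Real.pi_pos) hc hmem
    exact ⟨θ, hθ, hθ2⟩
  obtain ⟨θ, _, hθ⟩ := hIVT
  set v : ℂ := Complex.exp (θ * Complex.I) with hv
  have hvnorm : ‖v‖ = 1 := by simp [hv, Complex.norm_exp]
  have hcval : ‖(p : ℂ) + (q : ℂ) * v‖^2 = r^2 := by
    have he : ((p : ℂ) + (q : ℂ) * v) = ⟨p + q * Real.cos θ, q * Real.sin θ⟩ := by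
      rw [hv, Complex.exp_mul_I]
      apply Complex.ext <;>
        simp [Complex.cos_ofReal_re, Complex.sin_ofReal_re]
    rw [he, Complex.sq_norm, Complex.normSq_mk]
    nlinarith [Real.sin_sq_add_cos_sq θ]
  by_cases hr0 : r = 0
  · refine ⟨1, v, 1, by simp, hvnorm, by simp, ?_⟩
    have : ‖(p : ℂ) + (q : ℂ) * v‖ = 0 := by
      have := hcval; rw [hr0] at this
      nlinarith [norm_nonneg ((p : ℂ) + (q : ℂ) * v)]
    rw [norm_eq_zero] at this
    rw [hr0]; push_cast; rw [mul_one, mul_one]; rw [this]; ring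
  · refine ⟨1, v, -((p : ℂ) + (q : ℂ) * v) / r, by simp, hvnorm, ?_, ?_⟩
    · rw [norm_div, norm_neg]
      have hrpos : (0:ℝ) < r := lt_of_le_of_ne hr (Ne.symm hr0)
      have : ‖(p : ℂ) + (q : ℂ) * v‖ = r := by
        nlinarith [norm_nonneg ((p : ℂ) + (q : ℂ) * v)]
      rw [this]
      simp [Complex.norm_real, abs_of_pos hrpos]
      exact ne_of_gt hrpos
    · have hrC : (r:ℂ) ≠ 0 := by exact_mod_cast hr0
      field_simp
      ring

lemma exists_unit_vectors (d : ℕ) (l : Fin d → ℝ) (h0 : ∀ i, 0 ≤ l i)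
    (h : ∀ i, 2 * l i ≤ ∑ j, l j) :
    ∃ z : Fin d → ℂ, (∀ i, ‖z i‖ = 1) ∧ ∑ i, (l i : ℂ) * z i = 0 := by
  rcases Nat.eq_zero_or_pos d with hd | hd
  · subst hd; exact ⟨fun i => 1, fun i => i.elim0, by simp⟩
  have hne : (Finset.univ : Finset (Fin d)).Nonempty := univ_nonempty_iff.2 ⟨⟨0, hd⟩⟩
  -- i₀ : index of max
  obtain ⟨i₀, -, hi₀⟩ := Finset.exists_max_image Finset.univ l hne
  set S := ∑ j, l j with hS
  set M := l i₀ with hM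
  have hMS : 2 * M ≤ S := h i₀
  have hM0 : 0 ≤ M := h0 i₀
  set R := Finset.univ.erase i₀ with hR
  have hRsum : ∑ j ∈ R, l j = S - M := by
    rw [hR, Finset.sum_erase_eq_sub (mem_univ i₀)]
  -- find T ⊆ R with maximal sum among subsets with sum ≤ S/2
  set P := (R.powerset).filter (fun T => ∑ j ∈ T, l j ≤ S/2) with hP
  have hPne : P.Nonempty := ⟨∅, by simp [hP]; linarith⟩
  obtain ⟨T, hTP, hTmax⟩ := Finset.exists_max_image P (fun T => ∑ j ∈ T, l j) hPne
  rw [hP, Finset.mem_filter, Finset.mem_powerset] at hTP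
  obtain ⟨hTR, hTle⟩ := hTP
  set q := ∑ j ∈ T, l j with hq
  have hq0 : 0 ≤ q := Finset.sum_nonneg fun j _ => h0 j
  -- claim q ≥ S/2 - M
  have hqge : S/2 - M ≤ q := by
    by_contra hcon
    push_neg at hcon
    have hcompl : ∑ j ∈ R \ T, l j = (S - M) - q := by
      rw [Finset.sum_sdiff_eq_sub hTR, hRsum, hq]
    have hpos : 0 < ∑ j ∈ R \ T, l j := by rw [hcompl]; linarith
    obtain ⟨j, hjmem, hjpos⟩ : ∃ j ∈ R \ T, 0 < l j := by
      by_contra hc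
      push_neg at hc
      have : ∑ j ∈ R \ T, l j ≤ 0 := Finset.sum_nonpos fun j hj => hc j hj
      linarith
    have hjT : j ∉ T := (Finset.mem_sdiff.1 hjmem).2
    have hins : insert j T ∈ P := by
      rw [hP, Finset.mem_filter, Finset.mem_powerset]
      refine ⟨Finset.insert_subset (Finset.mem_sdiff.1 hjmem).1 hTR, ?_⟩
      rw [Finset.sum_insert hjT]
      have : l j ≤ M := hi₀ j (mem_univ j)
      linarith
    have := hTmax _ hins
    rw [Finset.sum_insert hjT] at this
    linarith
  set r := (S - M) - q with hr
  have hr0 : 0 ≤ r := by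
    have : q ≤ S/2 := hTle
    linarith
  have hrle : r ≤ S/2 := by rw [hr]; linarith
  -- triangle
  obtain ⟨u, v, w, hu1, hv1, hw1, huvw⟩ :=
    exists_triangle M q r hM0 hq0 hr0 (by linarith) (by linarith) (by linarith)
  refine ⟨fun i => if i = i₀ then u else if i ∈ T then v else w, ?_, ?_⟩
  · intro i
    by_cases h1 : i = i₀ <;> by_cases h2 : i ∈ T <;> simp [h1, h2, hu1, hv1, hw1]
  · have hsplit : ∑ i, (l i : ℂ) * (if i = i₀ then u else if i ∈ T then v else w)
        = (l i₀ : ℂ) * u + ∑ i ∈ R, (l i : ℂ) * (if i = i₀ then u else if i ∈ T then v else w) := by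
      rw [← Finset.sum_erase_add _ _ (mem_univ i₀)]
      simp [hR, add_comm]
    rw [hsplit]
    have hsplit2 : ∑ i ∈ R, (l i : ℂ) * (if i = i₀ then u else if i ∈ T then v else w)
        = ∑ i ∈ T, (l i : ℂ) * v + ∑ i ∈ R \ T, (l i : ℂ) * w := by
      rw [← Finset.sum_sdiff hTR]
      rw [add_comm]
      congr 1
      · apply Finset.sum_congr rfl
        intro i hi
        have hiR : i ∈ R := hTR hi
        have : i ≠ i₀ := Finset.ne_of_mem_erase hiR
        simp [this, hi]
      · apply Finset.sum_congr rfl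
        intro i hi
        rw [Finset.mem_sdiff] at hi
        have : i ≠ i₀ := Finset.ne_of_mem_erase hi.1
        simp [this, hi.2]
    rw [hsplit2, ← Finset.sum_mul, ← Finset.sum_mul]
    have e1 : ∑ i ∈ T, (l i : ℂ) = (q : ℂ) := by rw [hq]; push_cast; rfl
    have e2 : ∑ i ∈ R \ T, (l i : ℂ) = (r : ℂ) := by
      have : ∑ j ∈ R \ T, l j = r := by rw [Finset.sum_sdiff_eq_sub hTR, hRsum]
      rw [← this]; push_cast; rfl
    rw [e1, e2, ← hM]
    linear_combination huvw

theorem bracelet_order_one_iff_classical (d : ℕ) (α β : Fin d → ℝ)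
    (hα0 : ∀ i, 0 ≤ α i) (hα1 : ∑ i, α i = 1)
    (hβ0 : ∀ i, 0 ≤ β i) (hβ1 : ∑ i, β i = 1) :
    (∃ a b : Fin d → ℂ,
      (∑ i, ‖a i‖ ^ 2 = 1) ∧ (∑ i, ‖b i‖ ^ 2 = 1) ∧
      (∑ i, a i * starRingEnd ℂ (b i) = 0) ∧
      (∀ i, ‖a i‖ ^ 2 = α i) ∧ (∀ i, ‖b i‖ ^ 2 = β i)) ↔
    (∀ i : Fin d, Real.sqrt (α i * β i) ≤
      ∑ j ∈ Finset.univ.erase i, Real.sqrt (α j * β j)) := by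
  constructor
  · rintro ⟨a, b, -, -, hab, haα, hbβ⟩ i
    have hnorm : ∀ j, ‖a j * starRingEnd ℂ (b j)‖ = Real.sqrt (α j * β j) := by
      intro j
      rw [norm_mul, RCLike.norm_conj, Real.sqrt_mul (hα0 j), ← haα j, ← hbβ j,
        Real.sqrt_sq (norm_nonneg _), Real.sqrt_sq (norm_nonneg _)]
    have hsum : a i * starRingEnd ℂ (b i)
        = -∑ j ∈ Finset.univ.erase i, a j * starRingEnd ℂ (b j) := by
      have := hab
      rw [← Finset.sum_erase_add _ _ (mem_univ i)] at this
      linear_combination this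
    calc Real.sqrt (α i * β i) = ‖a i * starRingEnd ℂ (b i)‖ := (hnorm i).symm
      _ = ‖∑ j ∈ Finset.univ.erase i, a j * starRingEnd ℂ (b j)‖ := by
          rw [hsum, norm_neg]
      _ ≤ ∑ j ∈ Finset.univ.erase i, ‖a j * starRingEnd ℂ (b j)‖ := norm_sum_le _ _
      _ = ∑ j ∈ Finset.univ.erase i, Real.sqrt (α j * β j) :=
          Finset.sum_congr rfl fun j _ => hnorm j
  · intro hcond
    set l : Fin d → ℝ := fun i => Real.sqrt (α i * β i) with hl
    have h0 : ∀ i, 0 ≤ l i := fun i => Real.sqrt_nonneg _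
    have h2 : ∀ i, 2 * l i ≤ ∑ j, l j := by
      intro i
      have := hcond i
      have hsub : ∑ j ∈ Finset.univ.erase i, l j = (∑ j, l j) - l i :=
        Finset.sum_erase_eq_sub (mem_univ i)
      rw [hl] at hsub ⊢
      linarith [hcond i, hsub.symm.le, hsub.le]
    obtain ⟨z, hz1, hz0⟩ := exists_unit_vectors d l h0 h2
    refine ⟨fun i => (Real.sqrt (α i) : ℂ) * z i, fun i => (Real.sqrt (β i) : ℂ),
      ?_, ?_, ?_, ?_, ?_⟩
    · have : ∀ i : Fin d, ‖(Real.sqrt (α i) : ℂ) * z i‖ ^ 2 = α i := by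
        intro i
        rw [norm_mul, hz1 i, mul_one, Complex.norm_real,
          Real.norm_eq_abs, _root_.abs_of_nonneg (Real.sqrt_nonneg _), Real.sq_sqrt (hα0 i)]
      rw [Finset.sum_congr rfl fun i _ => this i, hα1]
    · have : ∀ i : Fin d, ‖((Real.sqrt (β i) : ℝ) : ℂ)‖ ^ 2 = β i := by
        intro i
        rw [Complex.norm_real, Real.norm_eq_abs, _root_.abs_of_nonneg (Real.sqrt_nonneg _),
          Real.sq_sqrt (hβ0 i)]
      rw [Finset.sum_congr rfl fun i _ => this i, hβ1]
    · rw [← hz0]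
      apply Finset.sum_congr rfl
      intro i _
      rw [Complex.conj_ofReal]
      simp only [hl]
      rw [Real.sqrt_mul (hα0 i)]
      push_cast
      ring
    · intro i
      rw [norm_mul, hz1 i, mul_one, Complex.norm_real,
        Real.norm_eq_abs, _root_.abs_of_nonneg (Real.sqrt_nonneg _), Real.sq_sqrt (hα0 i)]
    · intro i
      rw [Complex.norm_real, Real.norm_eq_abs, _root_.abs_of_nonneg (Real.sqrt_nonneg _),
        Real.sq_sqrt (hβ0 i)]
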